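/- For the SI process, the discrete-time simulation never overtakes the discrete-event simulation: for every step size h > 0, every initial state x₀, and every sequence a₁, a₂, … of edge-timer vectors with nonnegative entries, the sequences defined by X₀ = X̃₀ = x₀, Xᵢ = g(Xᵢ₋₁, aᵢ) and X̃ᵢ = g̃(X̃ᵢ₋₁, aᵢ) satisfy Xᵢ ≤ X̃ᵢ (componentwise) for every i ≥ 0. In particular, when the aᵢ are random, X(ih) := X̃ᵢ ≥ Xᵢ almost surely. -/
import Mathlib


open MeasureTheory ProbabilityTheory Real

/-- View a Boolean infection state as a real number (`true ↦ 1`, `false ↦ 0`). -/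
def boolToR (b : Bool) : ℝ := if b then 1 else 0

open Classical in
/-- One step of the SI discrete-time simulation (DTS): node `j` is infected afterwards iff
it was infected, or some infected neighbor`s edge timer fires within time `h`. -/
noncomputable def siDTS {V : Type*} (G : SimpleGraph V) (h : ℝ) (x : V → Bool)
    (a : G.edgeSet → ℝ) : V → Bool := fun j =>
  if x j = true ∨ ∃ j', ∃ hadj : G.Adj j j',
      x j' = true ∧ a ⟨s(j, j'), (SimpleGraph.mem_edgeSet G).mpr hadj⟩ ≤ h
  then true else false

open Classical in
/-- State at time `h` of the SI discrete-event simulation (DES) started at `x` with edge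
timers `a`, via the first-passage-percolation description: node `j` is infected iff it was
infected, or there is a path from an infected node to `j` whose timers sum to at most `h`. -/
noncomputable def siDES {V : Type*} (G : SimpleGraph V) (h : ℝ) (x : V → Bool)
    (a : G.edgeSet → ℝ) : V → Bool := fun j =>
  if x j = true ∨ ∃ j₀, ∃ p : G.Walk j₀ j, x j₀ = true ∧
      (p.edges.attach.map fun e => a ⟨e.1, p.edges_subset_edgeSet e.2⟩).sum ≤ h
  then true else false


lemma si_step_le {V : Type*} (G : SimpleGraph V) (h : ℝ) (x x' : V → Bool)
    (hxx : ∀ j, x j ≤ x' j) (a : G.edgeSet → ℝ) (j : V) :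
    siDTS G h x a j ≤ siDES G h x' a j := by
  unfold siDTS siDES
  split
  · rename_i hc
    have : x' j = true ∨ ∃ j₀, ∃ p : G.Walk j₀ j, x' j₀ = true ∧
        (p.edges.attach.map fun e => a ⟨e.1, p.edges_subset_edgeSet e.2⟩).sum ≤ h := by
      rcases hc with hj | ⟨j', hadj, hx', hle⟩
      · left
        have := hxx j; rw [hj] at this; exact top_le_iff.mp this
      · right
        refine ⟨j', SimpleGraph.Walk.cons hadj.symm SimpleGraph.Walk.nil, ?_, ?_⟩
        · have := hxx j'; rw [hx'] at this; exact top_le_iff.mp this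
        · simp only [SimpleGraph.Walk.edges_cons, SimpleGraph.Walk.edges_nil,
            List.attach_cons, List.map_cons, List.map_nil, List.sum_cons, List.sum_nil,
            add_zero, List.attach_nil]
          convert hle using 3
          exact Sym2.eq_swap
    rw [if_pos this]
  · simp

/-- **Theorem 1A (pathwise form).** For the SI process, the discrete-time simulation never
overtakes the discrete-event simulation: for every step size `h > 0`, every initial state
`x₀` and every sequence of nonnegative edge-timer vectors `a₁, a₂, …`, the sequences
`Xᵢ = g(Xᵢ₋₁, aᵢ)` and `X̃ᵢ = g̃(X̃ᵢ₋₁, aᵢ)` satisfy `Xᵢ ≤ X̃ᵢ` componentwise for all `i`. -/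
theorem si_dts_le_des {V : Type*} (G : SimpleGraph V) (h : ℝ) (hh : 0 < h)
    (x₀ : V → Bool) (a : ℕ → G.edgeSet → ℝ) (ha : ∀ i e, 0 ≤ a i e)
    (X Xt : ℕ → V → Bool)
    (hX0 : X 0 = x₀) (hXt0 : Xt 0 = x₀)
    (hX : ∀ i : ℕ, X (i + 1) = siDTS G h (X i) (a (i + 1)))
    (hXt : ∀ i : ℕ, Xt (i + 1) = siDES G h (Xt i) (a (i + 1))) :
    ∀ i : ℕ, ∀ j : V, X i j ≤ Xt i j := by
  intro i
  induction i with
  | zero => intro j; rw [hX0, hXt0]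
  | succ i ih =>
      intro j
      rw [hX i, hXt i]
      exact si_step_le G h (X i) (Xt i) ih (a (i + 1)) j
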